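/- Let D be a domain in ℝⁿ, n ≥ 2, and let x₀ ∈ ∂D. Let E ⊂ D be relatively closed in D and nowhere dense in D, and assume D is finitely connected on E. Assume there is an integer m ≥ 1 such that for every neighborhood U of x₀ there is a neighborhood V ⊂ U of x₀ with: (a) V ∩ D connected, and (b) (V ∩ D) \ E having at most m connected components. Let (x_k) and (y_k) be sequences in D \ E converging to x₀. Then there exist a strictly increasing sequence of indices (k_l) and open neighborhoods V_l of x₀ with V_l ⊂ B(x₀, 2^{−l}), l = 1, 2, …, such that for each l one has x_{k_l}, y_{k_l} ∈ V_l ∩ D and there is a path γ_l : [0,1] → V_l ∩ D with γ_l(0) = x_{k_l}, γ_l(1) = y_{k_l}, whose image meets E in at most m − 1 points. -/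

import Mathlib

open Set Filter Topology Metric

noncomputable section

namespace Stmt0Aux

variable {Y : Type*} [PseudoMetricSpace Y]

/-- Finite concatenation of an infinite family of paths, following the dyadic
partition `[1-2^{-t}, 1-2^{-t-1}]`, constant after stage `T+1`. -/
def FSeq : ∀ (T : ℕ) (c : ℕ → Y) (_ : ∀ t, Path (c t) (c (t+1))), Path (c 0) (c (T+1))
  | 0, c, σ => (σ 0).trans (Path.refl (c 1))
  | (T+1), c, σ => (σ 0).trans (FSeq T (fun t => c (t+1)) (fun t => σ (t+1)))

theorem FSeq_range (T : ℕ) (c : ℕ → Y) (σ : ∀ t, Path (c t) (c (t+1))) :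
    range ⇑(FSeq T c σ) ⊆ ⋃ t, range ⇑(σ t) := by
  induction T generalizing c σ with
  | zero =>
    rw [FSeq, Path.trans_range]
    apply union_subset
    · exact subset_iUnion (fun t => range ⇑(σ t)) 0
    · rintro p hp
      rcases hp with ⟨s, rfl⟩
      simp only [Path.refl_apply]
      have : c 1 ∈ range ⇑(σ 1) := ⟨0, by simp⟩
      exact mem_iUnion.2 ⟨1, this⟩
  | succ T ih =>
    rw [FSeq, Path.trans_range]
    apply union_subset
    · exact subset_iUnion (fun t => range ⇑(σ t)) 0
    · refine (ih _ _).trans ?_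
      refine iUnion_subset fun t => ?_
      exact subset_iUnion (fun t => range ⇑(σ t)) (t+1)

theorem FSeq_agree (T : ℕ) (c : ℕ → Y) (σ : ∀ t, Path (c t) (c (t+1))) (s : unitInterval)
    (hs : (s : ℝ) ≤ 1 - (2:ℝ)⁻¹ ^ (T+1)) :
    FSeq (T+1) c σ s = FSeq T c σ s := by
  induction T generalizing c σ s with
  | zero =>
    have hs' : (s : ℝ) ≤ 1/2 := by norm_num at hs ⊢; linarith
    rw [FSeq, FSeq, FSeq, Path.trans_apply, Path.trans_apply, dif_pos hs', dif_pos hs']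
  | succ T ih =>
    by_cases h2 : (s : ℝ) ≤ 1/2
    · rw [show FSeq (T+2) c σ = (σ 0).trans (FSeq (T+1) (fun t => c (t+1)) (fun t => σ (t+1))) from rfl,
        show FSeq (T+1) c σ = (σ 0).trans (FSeq T (fun t => c (t+1)) (fun t => σ (t+1))) from rfl,
        Path.trans_apply, Path.trans_apply, dif_pos h2, dif_pos h2]
    · rw [show FSeq (T+2) c σ = (σ 0).trans (FSeq (T+1) (fun t => c (t+1)) (fun t => σ (t+1))) from rfl,
        show FSeq (T+1) c σ = (σ 0).trans (FSeq T (fun t => c (t+1)) (fun t => σ (t+1))) from rfl,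
        Path.trans_apply, Path.trans_apply, dif_neg h2, dif_neg h2]
      apply ih
      push_cast
      have : (2:ℝ)⁻¹ ^ (T+1+1) = (2:ℝ)⁻¹ ^ (T+1) * 2⁻¹ := by ring
      rw [this] at hs
      push_cast at hs
      linarith

theorem FSeq_agree' (c : ℕ → Y) (σ : ∀ t, Path (c t) (c (t+1))) {T T' : ℕ} (hTT : T ≤ T')
    (s : unitInterval) (hs : (s : ℝ) ≤ 1 - (2:ℝ)⁻¹ ^ (T+1)) :
    FSeq T' c σ s = FSeq T c σ s := by
  induction T' with
  | zero => 
    have : T = 0 := Nat.le_zero.mp hTT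
    subst this; rfl
  | succ T' ih =>
    rcases Nat.lt_or_ge T (T'+1) with h | h
    · have hT' : T ≤ T' := Nat.lt_succ_iff.mp h
      have hb : (s : ℝ) ≤ 1 - (2:ℝ)⁻¹ ^ (T'+1) := by
        have : (2:ℝ)⁻¹ ^ (T'+1) ≤ (2:ℝ)⁻¹ ^ (T+1) := by
          apply pow_le_pow_of_le_one (by norm_num) (by norm_num)
          omega
        linarith
      rw [FSeq_agree T' c σ s hb, ih hT']
    · have : T = T' + 1 := le_antisymm hTT h
      subst this; rfl

theorem FSeq_tail (T : ℕ) (c : ℕ → Y) (σ : ∀ t, Path (c t) (c (t+1))) (T' : ℕ) (hTT : T ≤ T')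
    (s : unitInterval) (hs : 1 - (2:ℝ)⁻¹ ^ (T+1) ≤ (s : ℝ)) :
    FSeq T' c σ s ∈ ⋃ t, range ⇑(σ (t + T)) := by
  induction T generalizing c σ T' s with
  | zero =>
    have := FSeq_range T' c σ ⟨s, rfl⟩
    simpa using this
  | succ T ih =>
    obtain ⟨T'', rfl⟩ : ∃ T'', T' = T'' + 1 := ⟨T' - 1, by omega⟩
    have hT'' : T ≤ T'' := by omega
    have h2 : ¬ ((s : ℝ) ≤ 1/2) := by
      have h4 : (2:ℝ)⁻¹ ^ (T+1+1) ≤ (2:ℝ)⁻¹ ^ 2 := by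
        apply pow_le_pow_of_le_one (by norm_num) (by norm_num); omega
      push_cast at hs h4 ⊢
      nlinarith
    rw [show FSeq (T''+1) c σ = (σ 0).trans (FSeq T'' (fun t => c (t+1)) (fun t => σ (t+1))) from rfl,
      Path.trans_apply, dif_neg h2]
    have key := ih (fun t => c (t+1)) (fun t => σ (t+1)) T'' hT''
      ⟨2 * s - 1, unitInterval.two_mul_sub_one_mem_iff.2 ⟨(not_le.1 h2).le, s.2.2⟩⟩
      (by
        push_cast
        have : (2:ℝ)⁻¹ ^ (T+1+1) = (2:ℝ)⁻¹ ^ (T+1) * 2⁻¹ := by ring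
        rw [this] at hs
        push_cast at hs
        linarith)
    simp only [mem_iUnion] at key ⊢
    obtain ⟨t, ht⟩ := key
    exact ⟨t, ht⟩

end Stmt0Aux
theorem infinite_concat {Y : Type*} [PseudoMetricSpace Y] (z : Y) (c : ℕ → Y)
    (σ : ∀ t, Path (c t) (c (t+1))) (R : ℕ → ℝ) (hanti : Antitone R)
    (hR : Filter.Tendsto R Filter.atTop (nhds 0))
    (hσ : ∀ t, Set.range ⇑(σ t) ⊆ Metric.closedBall z (R t)) :
    ∃ γ : Path (c 0) z, Set.range ⇑γ ⊆ (⋃ t, Set.range ⇑(σ t)) ∪ {z} := by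
  classical
  -- the function
  set γf : unitInterval → Y := fun s =>
    if h : ∃ T : ℕ, (s : ℝ) ≤ 1 - (2:ℝ)⁻¹ ^ (T+1) then Stmt0Aux.FSeq (Nat.find h) c σ s else z
    with hγf
  have γ_eq : ∀ (s : unitInterval) (T : ℕ), (s : ℝ) ≤ 1 - (2:ℝ)⁻¹ ^ (T+1) →
      γf s = Stmt0Aux.FSeq T c σ s := by
    intro s T hT
    have h : ∃ T : ℕ, (s : ℝ) ≤ 1 - (2:ℝ)⁻¹ ^ (T+1) := ⟨T, hT⟩
    rw [hγf]
    simp only [dif_pos h]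
    have h1 : Nat.find h ≤ T := Nat.find_min' h hT
    exact (Stmt0Aux.FSeq_agree' c σ h1 s (Nat.find_spec h)).symm
  -- existence of a suitable T for s < 1
  have exT : ∀ s : unitInterval, (s : ℝ) < 1 → ∃ T : ℕ, (s : ℝ) ≤ 1 - (2:ℝ)⁻¹ ^ (T+1) := by
    intro s hs
    obtain ⟨T, hT⟩ := exists_pow_lt_of_lt_one (by linarith : (0:ℝ) < 1 - s) (by norm_num : (2:ℝ)⁻¹ < 1)
    exact ⟨T, by
      have : (2:ℝ)⁻¹ ^ (T+1) ≤ (2:ℝ)⁻¹ ^ T :=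
        pow_le_pow_of_le_one (by norm_num) (by norm_num) (by omega)
      linarith⟩
  have γf1 : ∀ s : unitInterval, (s:ℝ) = 1 → γf s = z := by
    intro s hs
    rw [hγf]
    have : ¬ ∃ T : ℕ, (s : ℝ) ≤ 1 - (2:ℝ)⁻¹ ^ (T+1) := by
      rintro ⟨T, hT⟩
      have : (0:ℝ) < (2:ℝ)⁻¹ ^ (T+1) := by positivity
      rw [hs] at hT; linarith
    simp only [dif_neg this]
  -- continuity
  have cont : Continuous γf := by
    rw [continuous_iff_continuousAt]
    intro s₀
    rcases lt_or_eq_of_le s₀.2.2 with h1 | h1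
    · -- s₀ < 1
      obtain ⟨T, hT⟩ := exT s₀ h1
      -- strict nbhd
      obtain ⟨T2, hT2⟩ := exT s₀ h1
      -- get strict bound with T+1
      have hTs : (s₀ : ℝ) < 1 - (2:ℝ)⁻¹ ^ (T+1+1) := by
        have e1 : (2:ℝ)⁻¹ ^ (T+1+1) = (2:ℝ)⁻¹ ^ (T+1) * 2⁻¹ := by ring
        have e2 : (0:ℝ) < (2:ℝ)⁻¹ ^ (T+1) := by positivity
        rw [e1]; nlinarith
      set N : Set unitInterval := {s | (s : ℝ) < 1 - (2:ℝ)⁻¹ ^ (T+1+1)} with hN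
      have hNopen : IsOpen N := isOpen_Iio.preimage continuous_subtype_val
      have hNs₀ : s₀ ∈ N := hTs
      have heq : ∀ s ∈ N, γf s = Stmt0Aux.FSeq (T+1) c σ s := fun s hs => γ_eq s (T+1) (le_of_lt hs)
      have : ContinuousAt (Stmt0Aux.FSeq (T+1) c σ) s₀ := (Stmt0Aux.FSeq (T+1) c σ).continuous.continuousAt
      apply this.congr
      exact Filter.eventuallyEq_of_mem (hNopen.mem_nhds hNs₀) (fun s hs => (heq s hs).symm)
    · -- s₀ = 1
      rw [Metric.continuousAt_iff]
      intro ε hε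
      obtain ⟨T, hTε⟩ : ∃ T, R T < ε := by
        have := (hR.eventually (eventually_lt_nhds hε)).exists
        simpa using this
      refine ⟨(2:ℝ)⁻¹ ^ (T+1), by positivity, ?_⟩
      intro s hdist
      have hs₀z : γf s₀ = z := γf1 s₀ h1
      rw [hs₀z]
      rcases lt_or_eq_of_le s.2.2 with h2 | h2
      · -- s < 1 : γf s = FSeq T* s with T* ≥ T
        obtain ⟨T1, hT1⟩ := exT s h2
        set T' := max T T1 with hT'
        have hb : (s : ℝ) ≤ 1 - (2:ℝ)⁻¹ ^ (T'+1) := by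
          have : (2:ℝ)⁻¹ ^ (T'+1) ≤ (2:ℝ)⁻¹ ^ (T1+1) :=
            pow_le_pow_of_le_one (by norm_num) (by norm_num) (by omega)
          linarith
        rw [γ_eq s T' hb]
        have hstail : 1 - (2:ℝ)⁻¹ ^ (T+1) ≤ (s : ℝ) := by
          have hd : |(s:ℝ) - (s₀:ℝ)| < (2:ℝ)⁻¹ ^ (T+1) := hdist
          rw [h1] at hd
          have := abs_lt.mp hd
          linarith [this.1]
        have hmem := Stmt0Aux.FSeq_tail T c σ T' (le_max_left _ _) s hstail
        simp only [Set.mem_iUnion] at hmem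
        obtain ⟨t, ht⟩ := hmem
        have : Stmt0Aux.FSeq T' c σ s ∈ Metric.closedBall z (R (t + T)) := hσ (t+T) ht
        have hRle : R (t+T) ≤ R T := hanti (by omega)
        have : dist (Stmt0Aux.FSeq T' c σ s) z ≤ R T :=
          le_trans (Metric.mem_closedBall.mp this) hRle
        linarith
      · rw [γf1 s h2]
        simpa using hε
  -- endpoints
  have hsource : γf 0 = c 0 := by
    have h0 : ((0 : unitInterval) : ℝ) ≤ 1 - (2:ℝ)⁻¹ ^ (0+1) := by norm_num
    rw [γ_eq 0 0 h0]
    show ((σ 0).trans (Path.refl (c 1))) 0 = c 0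
    simp
  have htarget : γf 1 = z := γf1 1 (by norm_num)
  refine ⟨⟨⟨γf, cont⟩, hsource, htarget⟩, ?_⟩
  rintro p ⟨s, rfl⟩
  by_cases h : ∃ T : ℕ, (s : ℝ) ≤ 1 - (2:ℝ)⁻¹ ^ (T+1)
  · left
    show γf s ∈ _
    rw [hγf]
    simp only [dif_pos h]
    exact Stmt0Aux.FSeq_range _ c σ ⟨s, rfl⟩
  · right
    show γf s ∈ _
    rw [hγf]
    simp only [dif_neg h]
    rfl
namespace Stmt0Aux

open Set Filter Topology Metric

/-- Maximality of relative connected components. -/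
theorem comp_max {Y : Type*} [TopologicalSpace Y] {F : Set Y} {x : Y} (hx : x ∈ F)
    {C : Set Y} (hC : IsPreconnected C) (hCF : C ⊆ F)
    (hne : (C ∩ connectedComponentIn F x).Nonempty) : C ⊆ connectedComponentIn F x := by
  obtain ⟨q, hqC, hqK⟩ := hne
  have h1 : C ⊆ connectedComponentIn F q := hC.subset_connectedComponentIn hqC hCF
  rwa [← connectedComponentIn_eq hqK] at h1

theorem access {Y : Type*} [NormedAddCommGroup Y] [NormedSpace ℝ Y]
    (D E O : Set Y) (hDE : IsOpen (D \ E))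
    (z : Y) (hzE : z ∈ E)
    (hfc : ∀ U' ∈ 𝓝 z, ∃ W ∈ 𝓝 z, W ⊆ U' ∧
      {C : Set Y | ∃ x ∈ (D ∩ W) \ E, C = connectedComponentIn ((D ∩ W) \ E) x}.Finite)
    (ρ : ℝ) (hρ : 0 < ρ) (hball : ball z ρ \ E ⊆ O) (hOD : O ⊆ D \ E)
    (p₀ : Y) (hp₀ : p₀ ∈ O) (K : Set Y) (hK : K = connectedComponentIn O p₀)
    (hzK : z ∈ closure K) :
    ∃ a ∈ K, ∃ γ : Path a z, range ⇑γ ⊆ K ∪ {z} := by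
  classical
  have maxK : ∀ C : Set Y, IsPreconnected C → C ⊆ O → (C ∩ K).Nonempty → C ⊆ K := by
    intro C hC hCO hne
    rw [hK] at hne ⊢
    exact comp_max hp₀ hC hCO hne
  have hKO : K ⊆ O := by rw [hK]; exact connectedComponentIn_subset _ _
  set Inv : ℕ → Set Y × Set Y → Prop := fun t q =>
    q.1 ∈ 𝓝 z ∧ q.1 ⊆ ball z (ρ / 2^(t+1)) ∧ z ∈ closure q.2 ∧ q.2 ⊆ K ∧
    (∃ x ∈ (D ∩ q.1) \ E, q.2 = connectedComponentIn ((D ∩ q.1) \ E) x) with hInvdef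
  -- one construction step
  have step : ∀ (t : ℕ) (W M : Set Y), W ∈ 𝓝 z → z ∈ closure M → M ⊆ K →
      (∀ C : Set Y, IsPreconnected C → C ⊆ (D ∩ W) \ E → (C ∩ M).Nonempty → C ⊆ M) →
      ∃ q : Set Y × Set Y, Inv t q ∧ q.1 ⊆ interior W ∧ q.2 ⊆ M := by
    intro t W M hWn hzM hMK hmax
    have hMD : M ⊆ D \ E := fun q hq => hOD (hKO (hMK hq))
    have hpos : (0:ℝ) < ρ / 2^(t+1) := by positivity
    set U' : Set Y := interior W ∩ ball z (ρ / 2^(t+1)) with hU'def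
    have hU' : U' ∈ 𝓝 z := inter_mem (interior_mem_nhds.mpr hWn) (ball_mem_nhds z hpos)
    obtain ⟨W', hW'n, hW'sub, hfin⟩ := hfc U' hU'
    have hzMW : z ∈ closure (M ∩ interior W') := by
      rw [mem_closure_iff_nhds] at hzM ⊢
      intro N hN
      obtain ⟨p, hp1, hp2⟩ := hzM (N ∩ interior W')
        (inter_mem hN (interior_mem_nhds.mpr hW'n))
      exact ⟨p, hp1.1, hp2, hp1.2⟩
    set S := {C : Set Y | ∃ x ∈ (D ∩ W') \ E, C = connectedComponentIn ((D ∩ W') \ E) x}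
      with hSdef
    have hcover : M ∩ interior W' ⊆ ⋃ C ∈ S, (C ∩ (M ∩ interior W')) := by
      intro q hq
      have hqmem : q ∈ (D ∩ W') \ E :=
        ⟨⟨(hMD hq.1).1, interior_subset hq.2⟩, (hMD hq.1).2⟩
      exact mem_biUnion ⟨q, hqmem, rfl⟩ ⟨mem_connectedComponentIn hqmem, hq⟩
    have hzcl : z ∈ ⋃ C ∈ S, closure (C ∩ (M ∩ interior W')) := by
      have h1 := closure_mono hcover
      have h2 := h1 hzMW
      rwa [hfin.closure_biUnion] at h2
    obtain ⟨C, hCS, hzC⟩ := mem_iUnion₂.mp hzcl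
    obtain ⟨xC, hxC, hCc⟩ := hCS
    have hCM : (C ∩ M).Nonempty := by
      by_contra hemp
      rw [not_nonempty_iff_eq_empty] at hemp
      have : C ∩ (M ∩ interior W') = ∅ := by
        apply eq_empty_of_subset_empty
        intro q hq
        rw [← hemp]; exact ⟨hq.1, hq.2.1⟩
      rw [this, closure_empty] at hzC
      exact hzC
    have hCpre : IsPreconnected C := by
      rw [hCc]; exact isPreconnected_connectedComponentIn
    have hCsub : C ⊆ (D ∩ W') \ E := by
      rw [hCc]; exact connectedComponentIn_subset _ _
    have hW'ball : W' ⊆ ball z (ρ / 2^(t+1)) := hW'sub.trans inter_subset_right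
    have hCW : C ⊆ (D ∩ W) \ E := fun q hq =>
      ⟨⟨(hCsub hq).1.1, interior_subset (hW'sub.trans inter_subset_left (hCsub hq).1.2)⟩,
        (hCsub hq).2⟩
    have hCMsub : C ⊆ M := hmax C hCpre hCW hCM
    refine ⟨(W', C), ⟨hW'n, hW'ball, ?_, hCMsub.trans hMK, ⟨xC, hxC, hCc⟩⟩,
      hW'sub.trans inter_subset_left, hCMsub⟩
    exact closure_mono inter_subset_left hzC
  -- maximality from comp-witness
  have invmax : ∀ (W M : Set Y), (∃ x ∈ (D ∩ W) \ E, M = connectedComponentIn ((D ∩ W) \ E) x) →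
      ∀ C : Set Y, IsPreconnected C → C ⊆ (D ∩ W) \ E → (C ∩ M).Nonempty → C ⊆ M := by
    rintro W M ⟨x₁, hx₁, rfl⟩ C hCpre hCsub hne
    exact comp_max hx₁ hCpre hCsub hne
  -- base
  have base : ∃ q : Set Y × Set Y, Inv 0 q := by
    obtain ⟨q, hq, _, _⟩ := step 0 (ball z ρ) K (ball_mem_nhds z hρ) hzK subset_rfl
      (by
        intro C hCpre hCsub hne
        apply maxK C hCpre _ hne
        intro p hp
        exact hball ⟨(hCsub hp).1.2, (hCsub hp).2⟩)
    exact ⟨q, hq⟩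
  -- recursive sequence
  let next : ∀ t : ℕ, {q : Set Y × Set Y // Inv t q} → {q : Set Y × Set Y // Inv (t+1) q} :=
    fun t q =>
      ⟨(step (t+1) q.1.1 q.1.2 q.2.1 q.2.2.2.1 q.2.2.2.2.1
          (invmax q.1.1 q.1.2 q.2.2.2.2.2)).choose,
        (step (t+1) q.1.1 q.1.2 q.2.1 q.2.2.2.1 q.2.2.2.2.1
          (invmax q.1.1 q.1.2 q.2.2.2.2.2)).choose_spec.1⟩
  let seq : ∀ t : ℕ, {q : Set Y × Set Y // Inv t q} :=
    fun t => Nat.rec ⟨base.choose, base.choose_spec⟩ next t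
  set W : ℕ → Set Y := fun t => (seq t).1.1 with hWdef
  set M : ℕ → Set Y := fun t => (seq t).1.2 with hMdef
  have hseq : ∀ t, Inv t ((W t, M t)) := fun t => (seq t).2
  have hchain : ∀ t, W (t+1) ⊆ interior (W t) ∧ M (t+1) ⊆ M t := by
    intro t
    have hrfl : seq (t+1) = next t (seq t) := rfl
    constructor
    · show (seq (t+1)).1.1 ⊆ interior (seq t).1.1
      rw [hrfl]
      exact (step (t+1) (seq t).1.1 (seq t).1.2 (seq t).2.1 (seq t).2.2.2.1 (seq t).2.2.2.2.1
          (invmax (seq t).1.1 (seq t).1.2 (seq t).2.2.2.2.2)).choose_spec.2.1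
    · show (seq (t+1)).1.2 ⊆ (seq t).1.2
      rw [hrfl]
      exact (step (t+1) (seq t).1.1 (seq t).1.2 (seq t).2.1 (seq t).2.2.2.1 (seq t).2.2.2.2.1
          (invmax (seq t).1.1 (seq t).1.2 (seq t).2.2.2.2.2)).choose_spec.2.2
  -- basic facts
  have hMne : ∀ t, (M t).Nonempty := by
    intro t
    by_contra hemp
    rw [not_nonempty_iff_eq_empty] at hemp
    have := (hseq t).2.2.1
    rw [hemp, closure_empty] at this
    exact this
  have hMK : ∀ t, M t ⊆ K := fun t => (hseq t).2.2.2.1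
  have hMD : ∀ t, M t ⊆ D \ E := fun t p hp => hOD (hKO (hMK t hp))
  have hMW : ∀ t, M t ⊆ W t := by
    intro t
    obtain ⟨x₁, hx₁, hM⟩ := (hseq t).2.2.2.2
    have hM' : M t = connectedComponentIn ((D ∩ W t) \ E) x₁ := hM
    rw [hM']
    exact fun p hp => ((connectedComponentIn_subset _ _) hp).1.2
  have hWball : ∀ t, W t ⊆ ball z (ρ / 2^(t+1)) := fun t => (hseq t).2.1
  -- choose points
  set c : ℕ → Y := fun t => (hMne (t+1)).some with hcdef
  have hc : ∀ t, c t ∈ M (t+1) := fun t => (hMne (t+1)).some_mem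
  -- paths
  have hσ : ∀ t, ∃ σ : Path (c t) (c (t+1)),
      range ⇑σ ⊆ K ∧ range ⇑σ ⊆ closedBall z (ρ / 2^(t+1)) := by
    intro t
    set Ω : Set Y := (D \ E) ∩ interior (W t) with hΩdef
    have hΩopen : IsOpen Ω := hDE.inter isOpen_interior
    have hMΩ : M (t+1) ⊆ Ω := fun p hp => ⟨hMD (t+1) hp, (hchain t).1 (hMW (t+1) hp)⟩
    have hcΩ : c t ∈ Ω := hMΩ (hc t)
    have hc'Ω : c (t+1) ∈ M (t+1) := (hchain (t+1)).2 (hc (t+1))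
    set Θ := connectedComponentIn Ω (c t) with hΘdef
    have hΘopen : IsOpen Θ := hΩopen.connectedComponentIn
    have hΘconn : IsConnected Θ := isConnected_connectedComponentIn_iff.mpr hcΩ
    have hΘpc : IsPathConnected Θ := (hΘopen.isConnected_iff_isPathConnected).mp hΘconn
    have hMΘ : M (t+1) ⊆ Θ := by
      apply IsPreconnected.subset_connectedComponentIn _ (hc t) hMΩ
      obtain ⟨x₁, hx₁, hM⟩ := (hseq (t+1)).2.2.2.2
      have hM' : M (t+1) = connectedComponentIn ((D ∩ W (t+1)) \ E) x₁ := hM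
      rw [hM']; exact isPreconnected_connectedComponentIn
    have hjoin : JoinedIn Θ (c t) (c (t+1)) :=
      hΘpc.joinedIn (c t) (hMΘ (hc t)) (c (t+1)) (hMΘ hc'Ω)
    obtain ⟨σ, hσmem⟩ := hjoin
    have hΘO : Θ ⊆ O := by
      intro p hp
      have h1 : p ∈ Ω := connectedComponentIn_subset _ _ hp
      apply hball
      refine ⟨?_, h1.1.2⟩
      have : p ∈ W t := interior_subset h1.2
      have := hWball t this
      have h2 : ρ / 2^(t+1) ≤ ρ := by
        rw [div_le_iff₀ (by positivity)]
        have h3 : (1:ℝ) ≤ 2^(t+1) := one_le_pow₀ (by norm_num : (1:ℝ) ≤ 2)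
        nlinarith
      exact mem_of_mem_of_subset this (ball_subset_ball h2)
    have hΘK : Θ ⊆ K := maxK Θ hΘconn.isPreconnected hΘO
      ⟨c t, hMΘ (hc t), hMK (t+1) (hc t)⟩
    refine ⟨σ, ?_, ?_⟩
    · rintro p ⟨s, rfl⟩; exact hΘK (hσmem s)
    · rintro p ⟨s, rfl⟩
      have h1 : σ s ∈ Ω := connectedComponentIn_subset _ _ (hσmem s)
      have h2 : σ s ∈ W t := interior_subset h1.2
      exact ball_subset_closedBall (hWball t h2)
  choose σ hσK hσball using hσ
  have hanti : Antitone (fun t : ℕ => ρ / 2^(t+1)) := by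
    intro s t hst
    apply div_le_div_of_nonneg_left hρ.le (by positivity)
    apply pow_le_pow_right₀ (by norm_num) (by omega)
  have hR0 : Tendsto (fun t : ℕ => ρ / 2^(t+1)) atTop (𝓝 0) := by
    have h1 : Tendsto (fun t : ℕ => (2:ℝ)^(t+1)) atTop atTop := by
      apply tendsto_atTop_mono (fun t => ?_) tendsto_natCast_atTop_atTop
      calc ((t:ℝ)) ≤ 2^t := by
            exact_mod_cast (Nat.lt_two_pow_self (n := t)) |>.le
        _ ≤ 2^(t+1) := by apply pow_le_pow_right₀ (by norm_num) (by omega)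
    have h2 := h1.inv_tendsto_atTop.const_mul ρ
    simp only [mul_zero] at h2
    apply h2.congr
    intro t
    simp only [Pi.inv_apply]
    ring
  obtain ⟨γ, hγ⟩ := infinite_concat z c σ (fun t => ρ / 2^(t+1)) hanti hR0 hσball
  refine ⟨c 0, hMK 1 (hc 0), γ, ?_⟩
  refine hγ.trans ?_
  apply union_subset
  · refine iUnion_subset fun t => ?_
    exact (hσK t).trans subset_union_left
  · exact subset_union_right

end Stmt0Aux

/-- **Lemma on paths.**
Let `D` be a domain in `ℝⁿ`, `n ≥ 2`, `x₀ ∈ ∂D`, `E ⊆ D` relatively closed and nowhere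
dense in `D`, `D` finitely connected on `E`.  Assume there is `m ≥ 1` such that every
neighborhood `U` of `x₀` contains a neighborhood `V` of `x₀` with `V ∩ D` connected and
`(V ∩ D) \ E` having at most `m` components.  If `x_k, y_k ∈ D \ E` converge to `x₀`,
then there are indices `k_l` (strictly increasing) and open neighborhoods
`V_l ⊆ B(x₀, 2^{-l})` of `x₀` such that `x_{k_l}, y_{k_l} ∈ V_l ∩ D` can be joined by a
path in `V_l ∩ D` meeting `E` in at most `m - 1` points. -/
theorem stmt0 (n : ℕ) (hn : 2 ≤ n)
    (D : Set (EuclideanSpace ℝ (Fin n)))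
    (hD_ne : D.Nonempty) (hD_open : IsOpen D) (hD_conn : IsConnected D)
    (x₀ : EuclideanSpace ℝ (Fin n)) (hx₀ : x₀ ∈ frontier D)
    (E : Set (EuclideanSpace ℝ (Fin n))) (hED : E ⊆ D)
    (hE_closed : ∃ F : Set (EuclideanSpace ℝ (Fin n)), IsClosed F ∧ E = F ∩ D)
    (hE_nd : interior (closure E) ∩ D = ∅)
    (hE_fc : ∀ z₀ ∈ E, ∀ U ∈ 𝓝 z₀, ∃ V ∈ 𝓝 z₀, V ⊆ U ∧
      {C : Set (EuclideanSpace ℝ (Fin n)) |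
        ∃ x ∈ (D ∩ V) \ E, C = connectedComponentIn ((D ∩ V) \ E) x}.Finite)
    (m : ℕ) (hm : 1 ≤ m)
    (hnbhd : ∀ U ∈ 𝓝 x₀, ∃ V ∈ 𝓝 x₀, V ⊆ U ∧ IsConnected (V ∩ D) ∧
      ∃ 𝒞 : Finset (Set (EuclideanSpace ℝ (Fin n))), 𝒞.card ≤ m ∧
        ∀ x ∈ (V ∩ D) \ E, connectedComponentIn ((V ∩ D) \ E) x ∈ 𝒞)
    (x y : ℕ → EuclideanSpace ℝ (Fin n))
    (hx : ∀ k, x k ∈ D \ E) (hy : ∀ k, y k ∈ D \ E)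
    (hxlim : Tendsto x atTop (𝓝 x₀)) (hylim : Tendsto y atTop (𝓝 x₀)) :
    ∃ k : ℕ → ℕ, StrictMono k ∧
      ∃ V : ℕ → Set (EuclideanSpace ℝ (Fin n)),
        ∀ l : ℕ, IsOpen (V l) ∧ x₀ ∈ V l ∧ V l ⊆ ball x₀ ((2 : ℝ) ^ (-(l : ℤ))) ∧
          x (k l) ∈ V l ∩ D ∧ y (k l) ∈ V l ∩ D ∧
          ∃ γ : Path (x (k l)) (y (k l)), range γ ⊆ V l ∩ D ∧
            (range γ ∩ E).Finite ∧ (range γ ∩ E).ncard ≤ m - 1 := by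
  classical
  have hDEopen : IsOpen (D \ E) := by
    obtain ⟨F, hFcl, hEF⟩ := hE_closed
    have hDE' : D \ E = D ∩ Fᶜ := by
      rw [hEF]
      ext p
      simp only [mem_diff, mem_inter_iff, mem_compl_iff]
      tauto
    rw [hDE']
    exact hD_open.inter hFcl.isOpen_compl
  have core : ∀ r : ℝ, 0 < r → ∃ N : ℕ, ∀ k ≥ N,
      x k ∈ ball x₀ r ∧ y k ∈ ball x₀ r ∧
      ∃ γ : Path (x k) (y k), range ⇑γ ⊆ ball x₀ r ∩ D ∧
        (range ⇑γ ∩ E).Finite ∧ (range ⇑γ ∩ E).ncard ≤ m - 1 := by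
    intro r hr
    set U := ball x₀ r with hUdef
    obtain ⟨V, hVn, hVU, -, 𝒞, h𝒞card, h𝒞⟩ := hnbhd U (ball_mem_nhds x₀ hr)
    obtain ⟨ε, hε, hεV⟩ := Metric.mem_nhds_iff.mp hVn
    set O := U ∩ (D \ E) with hOdef
    have hOopen : IsOpen O := isOpen_ball.inter hDEopen
    have hODE : O ⊆ D \ E := inter_subset_right
    have hOUD : O ⊆ U ∩ D := fun p hp => ⟨hp.1, hp.2.1⟩
    set 𝒦 : Set (Set (EuclideanSpace ℝ (Fin n))) := (fun p => connectedComponentIn O p) '' (ball x₀ ε ∩ (D \ E))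
      with h𝒦def
    have hBεO : ball x₀ ε ∩ (D \ E) ⊆ O := fun p hp => ⟨hVU (hεV hp.1), hp.2⟩
    have hBεSE : ball x₀ ε ∩ (D \ E) ⊆ (V ∩ D) \ E := fun p hp =>
      ⟨⟨hεV hp.1, hp.2.1⟩, hp.2.2⟩
    have hSEO : (V ∩ D) \ E ⊆ O := fun p hp => ⟨hVU hp.1.1, hp.1.2, hp.2⟩
    set 𝒯 : Set (Set (EuclideanSpace ℝ (Fin n))) := (fun p => connectedComponentIn ((V ∩ D) \ E) p) ''
      (ball x₀ ε ∩ (D \ E)) with h𝒯def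
    have h𝒯C : 𝒯 ⊆ ↑𝒞 := by
      rintro T ⟨p, hp, rfl⟩
      exact h𝒞 p (hBεSE hp)
    have h𝒯fin : 𝒯.Finite := 𝒞.finite_toSet.subset h𝒯C
    set FF : Set (EuclideanSpace ℝ (Fin n)) → Set (EuclideanSpace ℝ (Fin n)) := fun T => ⋃ p ∈ T, connectedComponentIn O p with hFFdef
    have h𝒦sub : 𝒦 ⊆ FF '' 𝒯 := by
      rintro K ⟨p, hp, rfl⟩
      refine ⟨connectedComponentIn ((V ∩ D) \ E) p, ⟨p, hp, rfl⟩, ?_⟩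
      have hpSE : p ∈ (V ∩ D) \ E := hBεSE hp
      have hTsub : connectedComponentIn ((V ∩ D) \ E) p ⊆ connectedComponentIn O p :=
        isPreconnected_connectedComponentIn.subset_connectedComponentIn
          (mem_connectedComponentIn hpSE)
          ((connectedComponentIn_subset _ _).trans hSEO)
      apply subset_antisymm
      · refine iUnion₂_subset fun q hq => ?_
        rw [← connectedComponentIn_eq (hTsub hq)]
      · intro w hw
        exact mem_biUnion (mem_connectedComponentIn hpSE) hw
    have h𝒦fin : 𝒦.Finite := (h𝒯fin.image FF).subset h𝒦sub
    have h𝒦card : 𝒦.ncard ≤ m := by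
      calc 𝒦.ncard ≤ (FF '' 𝒯).ncard := ncard_le_ncard h𝒦sub (h𝒯fin.image FF)
        _ ≤ 𝒯.ncard := ncard_image_le h𝒯fin
        _ ≤ (↑𝒞 : Set (Set (EuclideanSpace ℝ (Fin n)))).ncard := ncard_le_ncard h𝒯C 𝒞.finite_toSet
        _ = 𝒞.card := ncard_coe_finset 𝒞
        _ ≤ m := h𝒞card
    have h𝒦open : ∀ K ∈ 𝒦, IsOpen K := by
      rintro K ⟨p, hp, rfl⟩
      exact hOopen.connectedComponentIn
    have h𝒦O : ∀ K ∈ 𝒦, K ⊆ O := by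
      rintro K ⟨p, hp, rfl⟩
      exact connectedComponentIn_subset _ _
    have h𝒦pc : ∀ K ∈ 𝒦, IsPathConnected K := by
      rintro K ⟨p, hp, rfl⟩
      exact (hOopen.connectedComponentIn).isConnected_iff_isPathConnected.mp
        (isConnected_connectedComponentIn_iff.mpr (hBεO hp))
    have heqdj : ∀ K ∈ 𝒦, ∀ K' ∈ 𝒦, (K ∩ K').Nonempty → K = K' := by
      rintro K ⟨p, hp, rfl⟩ K' ⟨p', hp', rfl⟩ ⟨w, hw1, hw2⟩
      show connectedComponentIn O p = connectedComponentIn O p'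
      have e1 : connectedComponentIn O p = connectedComponentIn O w := connectedComponentIn_eq hw1
      have e2 : connectedComponentIn O p' = connectedComponentIn O w := connectedComponentIn_eq hw2
      exact e1.trans e2.symm
    obtain ⟨V2, hV2n, hV2sub, hV2conn, -⟩ := hnbhd (ball x₀ ε) (ball_mem_nhds x₀ hε)
    obtain ⟨ε2, hε2, hε2V⟩ := Metric.mem_nhds_iff.mp hV2n
    obtain ⟨N, hN⟩ := Filter.eventually_atTop.mp
      ((hxlim.eventually (ball_mem_nhds x₀ hε2)).and (hylim.eventually (ball_mem_nhds x₀ hε2)))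
    refine ⟨N, fun k hk => ?_⟩
    obtain ⟨hxk2, hyk2⟩ := hN k hk
    have hxkε : x k ∈ ball x₀ ε ∩ (D \ E) := ⟨hV2sub (hε2V hxk2), hx k⟩
    have hykε : y k ∈ ball x₀ ε ∩ (D \ E) := ⟨hV2sub (hε2V hyk2), hy k⟩
    refine ⟨hVU (hεV hxkε.1), hVU (hεV hykε.1), ?_⟩
    have hxkO : x k ∈ O := hBεO hxkε
    have hykO : y k ∈ O := hBεO hykε
    set Kx := connectedComponentIn O (x k) with hKxdef
    set Ky := connectedComponentIn O (y k) with hKydef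
    have hKx𝒦 : Kx ∈ 𝒦 := ⟨x k, hxkε, rfl⟩
    have hKy𝒦 : Ky ∈ 𝒦 := ⟨y k, hykε, rfl⟩
    haveI : Fintype ↥𝒦 := h𝒦fin.fintype
    set G : SimpleGraph ↥𝒦 :=
      { Adj := fun a b => a ≠ b ∧ ∃ z, z ∈ E ∧ z ∈ U ∧ z ∈ closure a.1 ∧ z ∈ closure b.1
        symm := ⟨by rintro a b ⟨hne, z, h1, h2, h3, h4⟩; exact ⟨hne.symm, z, h1, h2, h4, h3⟩⟩
        loopless := ⟨by rintro a ⟨hne, -⟩; exact hne rfl⟩ } with hGdef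
    set vx : ↥𝒦 := ⟨Kx, hKx𝒦⟩ with hvxdef
    set vy : ↥𝒦 := ⟨Ky, hKy𝒦⟩ with hvydef
    have reach : G.Reachable vx vy := by
      by_contra hnr
      set SA : Set (Set (EuclideanSpace ℝ (Fin n))) := {K | ∃ hK : K ∈ 𝒦, G.Reachable vx ⟨K, hK⟩} with hSAdef
      set SB : Set (Set (EuclideanSpace ℝ (Fin n))) := {K | ∃ hK : K ∈ 𝒦, ¬ G.Reachable vx ⟨K, hK⟩} with hSBdef
      have hSA𝒦 : SA ⊆ 𝒦 := fun K hK => hK.1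
      have hSB𝒦 : SB ⊆ 𝒦 := fun K hK => hK.1
      set A := ⋃₀ SA with hAdef
      set B := ⋃₀ SB with hBdef
      have hAopen : IsOpen A := isOpen_sUnion (fun K hK => h𝒦open K (hSA𝒦 hK))
      have hBopen : IsOpen B := isOpen_sUnion (fun K hK => h𝒦open K (hSB𝒦 hK))
      have hclA : closure A = ⋃ K ∈ SA, closure K := (h𝒦fin.subset hSA𝒦).closure_sUnion
      have hclB : closure B = ⋃ K ∈ SB, closure K := (h𝒦fin.subset hSB𝒦).closure_sUnion
      have hcompAB : ∀ p ∈ ball x₀ ε ∩ (D \ E), p ∈ A ∪ B := by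
        intro p hp
        have hK𝒦 : connectedComponentIn O p ∈ 𝒦 := ⟨p, hp, rfl⟩
        have hpK : p ∈ connectedComponentIn O p := mem_connectedComponentIn (hBεO hp)
        by_cases hreach : G.Reachable vx ⟨connectedComponentIn O p, hK𝒦⟩
        · exact Or.inl ⟨connectedComponentIn O p, ⟨hK𝒦, hreach⟩, hpK⟩
        · exact Or.inr ⟨connectedComponentIn O p, ⟨hK𝒦, hreach⟩, hpK⟩
      have hKinA : ∀ K ∈ 𝒦, ∀ p ∈ K, p ∈ closure A → K ∈ SA := by
        intro K hK p hpK hpclA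
        obtain ⟨q, hq1, hq2⟩ := mem_closure_iff.mp hpclA K (h𝒦open K hK) hpK
        obtain ⟨K', hK'SA, hqK'⟩ := hq2
        have : K = K' := heqdj K hK K' (hSA𝒦 hK'SA) ⟨q, hq1, hqK'⟩
        rwa [this]
      have hKinB : ∀ K ∈ 𝒦, ∀ p ∈ K, p ∈ closure B → K ∈ SB := by
        intro K hK p hpK hpclB
        obtain ⟨q, hq1, hq2⟩ := mem_closure_iff.mp hpclB K (h𝒦open K hK) hpK
        obtain ⟨K', hK'SB, hqK'⟩ := hq2
        have : K = K' := heqdj K hK K' (hSB𝒦 hK'SB) ⟨q, hq1, hqK'⟩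
        rwa [this]
      have hSASB : ∀ K, K ∈ SA → K ∈ SB → False := by
        rintro K ⟨hK1, hr1⟩ ⟨hK2, hr2⟩
        exact hr2 hr1
      set u := (closure B)ᶜ with hudef
      set v := (closure A)ᶜ with hvdef
      have hcover : V2 ∩ D ⊆ u ∪ v := by
        intro p hp
        by_contra hpuv
        simp only [hudef, hvdef, mem_union, mem_compl_iff, not_or, not_not] at hpuv
        obtain ⟨hpclB, hpclA⟩ := hpuv
        have hpball : p ∈ ball x₀ ε := hV2sub hp.1
        by_cases hpE : p ∈ E
        · rw [hclA] at hpclA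
          rw [hclB] at hpclB
          obtain ⟨Ka, hKaSA, hpKa⟩ := mem_iUnion₂.mp hpclA
          obtain ⟨Kb, hKbSB, hpKb⟩ := mem_iUnion₂.mp hpclB
          obtain ⟨hKa𝒦, hra⟩ := hKaSA
          obtain ⟨hKb𝒦, hrb⟩ := hKbSB
          have hne : (⟨Ka, hKa𝒦⟩ : ↥𝒦) ≠ ⟨Kb, hKb𝒦⟩ := by
            intro heq
            apply hrb
            rwa [← heq]
          have hadj : G.Adj ⟨Ka, hKa𝒦⟩ ⟨Kb, hKb𝒦⟩ :=
            ⟨hne, p, hpE, hVU (hεV hpball), hpKa, hpKb⟩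
          exact hrb (hra.trans hadj.reachable)
        · have hpO' : p ∈ ball x₀ ε ∩ (D \ E) := ⟨hpball, hp.2, hpE⟩
          have hK𝒦 : connectedComponentIn O p ∈ 𝒦 := ⟨p, hpO', rfl⟩
          have hpK : p ∈ connectedComponentIn O p := mem_connectedComponentIn (hBεO hpO')
          exact hSASB _ (hKinA _ hK𝒦 p hpK hpclA) (hKinB _ hK𝒦 p hpK hpclB)
      have hdisj : ∀ p ∈ V2 ∩ D, p ∈ u → p ∈ v → False := by
        intro p hp hpu hpv
        simp only [hudef, hvdef, mem_compl_iff] at hpu hpv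
        have hpball : p ∈ ball x₀ ε := hV2sub hp.1
        by_cases hpE : p ∈ E
        · have hpcl : p ∈ closure (A ∪ B) := by
            rw [mem_closure_iff_nhds]
            intro N' hN'
            set W0 := interior N' ∩ (ball x₀ ε ∩ D) with hW0def
            have hW0open : IsOpen W0 := isOpen_interior.inter (isOpen_ball.inter hD_open)
            have hpW0 : p ∈ W0 := ⟨mem_interior_iff_mem_nhds.mpr hN', hpball, hp.2⟩
            have hW0E : ¬ (W0 ⊆ E) := by
              intro hsub
              have h2 : W0 ⊆ interior (closure E) :=
                interior_maximal (hsub.trans subset_closure) hW0open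
              have h3 : p ∈ interior (closure E) ∩ D := ⟨h2 hpW0, hp.2⟩
              rw [hE_nd] at h3
              exact h3
            obtain ⟨q, hqW0, hqE⟩ := not_subset.mp hW0E
            exact ⟨q, interior_subset hqW0.1, hcompAB q ⟨hqW0.2.1, hqW0.2.2, hqE⟩⟩
          rw [closure_union] at hpcl
          rcases hpcl with h | h
          · exact hpv h
          · exact hpu h
        · rcases hcompAB p ⟨hpball, hp.2, hpE⟩ with h | h
          · exact hpv (subset_closure h)
          · exact hpu (subset_closure h)
      have hxku : x k ∈ u := by
        simp only [hudef, mem_compl_iff]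
        intro hclB'
        have h1 : Kx ∈ SB := hKinB Kx hKx𝒦 (x k) (mem_connectedComponentIn hxkO) hclB'
        exact h1.2 (SimpleGraph.Reachable.refl vx)
      have hykv : y k ∈ v := by
        simp only [hvdef, mem_compl_iff]
        intro hclA'
        have h1 : Ky ∈ SA := hKinA Ky hKy𝒦 (y k) (mem_connectedComponentIn hykO) hclA'
        exact hnr h1.2
      have hxkV2 : x k ∈ V2 ∩ D := ⟨hε2V hxk2, (hx k).1⟩
      have hykV2 : y k ∈ V2 ∩ D := ⟨hε2V hyk2, (hy k).1⟩
      obtain ⟨p, hp⟩ := hV2conn.isPreconnected u v isClosed_closure.isOpen_compl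
        isClosed_closure.isOpen_compl hcover ⟨x k, hxkV2, hxku⟩ ⟨y k, hykV2, hykv⟩
      exact hdisj p hp.1 hp.2.1 hp.2.2
    -- realize a walk as a Euclidean path
    have build : ∀ (a b : ↥𝒦) (w : G.Walk a b) (p : EuclideanSpace ℝ (Fin n)), p ∈ a.1 → ∀ q, q ∈ b.1 →
        ∃ γ : Path p q, range ⇑γ ⊆ U ∩ D ∧ (range ⇑γ ∩ E).Finite ∧
          (range ⇑γ ∩ E).ncard ≤ w.length := by
      intro a b w
      induction w with
      | @nil a' =>
        intro p hp q hq
        obtain ⟨γ, hγ⟩ := (h𝒦pc _ a'.2).joinedIn p hp q hq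
        have hrK : range ⇑γ ⊆ a'.1 := by rintro w' ⟨s, rfl⟩; exact hγ s
        have hE0 : range ⇑γ ∩ E = ∅ := by
          apply eq_empty_of_subset_empty
          rintro w' ⟨hw1, hw2⟩
          exact absurd hw2 ((h𝒦O _ a'.2) (hrK hw1)).2.2
        refine ⟨γ, hrK.trans ((fun w' hw' => hOUD (h𝒦O _ a'.2 hw'))), ?_, ?_⟩
        · rw [hE0]; exact finite_empty
        · rw [hE0]; simp
      | @cons va vb' vb hadj' w'' ih =>
        intro p hp q hq
        have hadj2 := hadj'
        obtain ⟨hne, z, hzE', hzU, hzca, hzcb⟩ := hadj2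
        have hzUD : z ∈ U ∩ D := ⟨hzU, hED hzE'⟩
        obtain ⟨ρ, hρpos, hρsub⟩ := Metric.isOpen_iff.mp (isOpen_ball.inter hD_open) z hzUD
        have hballO : ball z ρ \ E ⊆ O := by
          intro w0 hw0
          have h1 := hρsub hw0.1
          exact ⟨h1.1, h1.2, hw0.2⟩
        obtain ⟨pa, hpa, hKa⟩ := va.2
        obtain ⟨a', ha'K, α, hα⟩ := Stmt0Aux.access D E O hDEopen z hzE' (hE_fc z hzE')
          ρ hρpos hballO hODE pa (hBεO hpa) va.1 hKa.symm hzca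
        obtain ⟨pb, hpb, hKb⟩ := vb'.2
        obtain ⟨b'', hb''K, β, hβ⟩ := Stmt0Aux.access D E O hDEopen z hzE' (hE_fc z hzE')
          ρ hρpos hballO hODE pb (hBεO hpb) vb'.1 hKb.symm hzcb
        obtain ⟨γ', hγ'UD, hγ'fin, hγ'card⟩ := ih b'' hb''K q hq
        obtain ⟨δ, hδ⟩ := (h𝒦pc _ va.2).joinedIn p hp a' ha'K
        set γ : Path p q := δ.trans (α.trans ((β.symm).trans γ')) with hγdef
        have hrange : range ⇑γ =
            range ⇑δ ∪ (range ⇑α ∪ (range ⇑β.symm ∪ range ⇑γ')) := by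
          rw [hγdef, Path.trans_range, Path.trans_range, Path.trans_range]
        have hrδ : range ⇑δ ⊆ va.1 := by rintro w0 ⟨s, rfl⟩; exact hδ s
        have hrβs : range ⇑β.symm = range ⇑β := by
          ext w0
          constructor
          · rintro ⟨s, rfl⟩; exact ⟨unitInterval.symm s, rfl⟩
          · rintro ⟨s, rfl⟩; exact ⟨unitInterval.symm s, by simp [Path.symm_apply]⟩
        have hUD : range ⇑γ ⊆ U ∩ D := by
          rw [hrange]
          apply union_subset (hrδ.trans (fun w0 hw0 => hOUD (h𝒦O _ va.2 hw0)))
          apply union_subset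
          · refine hα.trans (union_subset (fun w0 hw0 => hOUD (h𝒦O _ va.2 hw0)) ?_)
            rintro w0 rfl
            exact hzUD
          · rw [hrβs]
            apply union_subset
            · refine hβ.trans (union_subset (fun w0 hw0 => hOUD (h𝒦O _ vb'.2 hw0)) ?_)
              rintro w0 rfl
              exact hzUD
            · exact hγ'UD
        have hEsub : range ⇑γ ∩ E ⊆ insert z (range ⇑γ' ∩ E) := by
          rw [hrange]
          rintro w0 ⟨hw0u, hw0E⟩
          rcases hw0u with h | h
          · exact absurd hw0E ((h𝒦O _ va.2) (hrδ h)).2.2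
          rcases h with h | h
          · rcases hα h with h' | h'
            · exact absurd hw0E ((h𝒦O _ va.2) h').2.2
            · exact Or.inl h'
          rw [hrβs] at h
          rcases h with h | h
          · rcases hβ h with h' | h'
            · exact absurd hw0E ((h𝒦O _ vb'.2) h').2.2
            · exact Or.inl h'
          · exact Or.inr ⟨h, hw0E⟩
        refine ⟨γ, hUD, (hγ'fin.insert z).subset hEsub, ?_⟩
        calc (range ⇑γ ∩ E).ncard ≤ (insert z (range ⇑γ' ∩ E)).ncard :=
              ncard_le_ncard hEsub (hγ'fin.insert z)
          _ ≤ (range ⇑γ' ∩ E).ncard + 1 := ncard_insert_le _ _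
          _ ≤ w''.length + 1 := by omega
          _ = (SimpleGraph.Walk.cons hadj' w'').length := (SimpleGraph.Walk.length_cons _ _).symm
    obtain ⟨w⟩ := reach
    have hbp : w.bypass.IsPath := SimpleGraph.Walk.bypass_isPath w
    have hlen : w.bypass.length < Fintype.card ↥𝒦 := hbp.length_lt
    have hcard : Fintype.card ↥𝒦 = 𝒦.ncard := by
      rw [← Nat.card_coe_set_eq, Nat.card_eq_fintype_card]
    obtain ⟨γ, h1, h2, h3⟩ := build vx vy w.bypass (x k) (mem_connectedComponentIn hxkO)
      (y k) (mem_connectedComponentIn hykO)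
    refine ⟨γ, h1, h2, ?_⟩
    have h4 : w.bypass.length < 𝒦.ncard := hcard ▸ hlen
    omega
  -- assemble along scales
  have hpos : ∀ l : ℕ, (0:ℝ) < (2 : ℝ) ^ (-(l : ℤ)) := fun l => zpow_pos (by norm_num) _
  choose Nf hNf using fun l : ℕ => core ((2:ℝ) ^ (-(l:ℤ))) (hpos l)
  set kf : ℕ → ℕ := fun l => Nat.rec (Nf 0) (fun l' prev => max (Nf (l'+1)) (prev+1)) l
    with hkfdef
  have hkmono : StrictMono kf :=
    strictMono_nat_of_lt_succ (fun l => lt_of_lt_of_le (Nat.lt_succ_self _) (le_max_right _ _))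
  have hkN : ∀ l, Nf l ≤ kf l := by
    intro l
    cases l with
    | zero => exact le_refl _
    | succ l' => exact le_max_left _ _
  refine ⟨kf, hkmono, fun l => ball x₀ ((2:ℝ) ^ (-(l:ℤ))), fun l => ?_⟩
  obtain ⟨hxb, hyb, γ, hγ1, hγ2, hγ3⟩ := hNf l (kf l) (hkN l)
  exact ⟨isOpen_ball, mem_ball_self (hpos l), subset_rfl,
    ⟨hxb, (hx _).1⟩, ⟨hyb, (hy _).1⟩, γ, hγ1, hγ2, hγ3⟩
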